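/- Let H = (V, ℰ) be an acyclic hypergraph and let E_i and E_j be two distinct hyperedges of H. Then H has a join tree containing the edge E_iE_j if and only if E_i ∩ E_j separates E_i \ E_j from E_j \ E_i in H. -/

import Mathlib

open SimpleGraph

/-- `T` is a join tree for the hypergraph whose hyperedge family is `E` (indexed by `ι`):
`T` is a tree on the hyperedges and, for every vertex `v`, the hyperedges containing `v`
induce a connected (nonempty sets being preconnected) subgraph of `T`. -/
def IsJoinTree {V ι : Type*} (E : ι → Finset V) (T : SimpleGraph ι) : Prop :=
  T.IsTree ∧ ∀ v : V, (T.induce {i | v ∈ E i}).Preconnected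

/-- A hypergraph is acyclic if it admits a join tree. -/
def IsAcyclicHG {V ι : Type*} (E : ι → Finset V) : Prop :=
  ∃ T : SimpleGraph ι, IsJoinTree E T
/-- A list of vertices forms a path in the hypergraph `E` if each two consecutive
vertices lie in a common hyperedge. -/
def FormsPath {V ι : Type*} (E : ι → Finset V) (p : List V) : Prop :=
  p.Chain' fun a b => ∃ i, a ∈ E i ∧ b ∈ E i

/-- `X` separates `Y` from `Z` in the hypergraph `E`: `X` is nonempty and every sequence
of vertices forming a path in `E` from a vertex of `Y` to a vertex of `Z` contains a
vertex of `X`. -/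
def Separates {V ι : Type*} (E : ι → Finset V) (X Y Z : Finset V) : Prop :=
  X.Nonempty ∧ ∀ p : List V, FormsPath E p →
    (∃ y ∈ Y, p.head? = some y) → (∃ z ∈ Z, p.getLast? = some z) →
    ∃ x ∈ X, x ∈ p
/-- The incidence graph of a hypergraph: the bipartite graph on vertices and hyperedges
where a vertex is adjacent to the hyperedges containing it. -/
def incidenceGraph {V ι : Type*} (E : ι → Finset V) : SimpleGraph (V ⊕ ι) where
  Adj a b :=
    (∃ v i, a = Sum.inl v ∧ b = Sum.inr i ∧ v ∈ E i) ∨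
    (∃ v i, a = Sum.inr i ∧ b = Sum.inl v ∧ v ∈ E i)
  symm := by
    constructor
    rintro a b (⟨v, i, rfl, rfl, h⟩ | ⟨v, i, rfl, rfl, h⟩)
    · exact Or.inr ⟨v, i, rfl, rfl, h⟩
    · exact Or.inl ⟨v, i, rfl, rfl, h⟩
  loopless := by
    constructor
    rintro a (⟨v, i, rfl, h, -⟩ | ⟨v, i, rfl, h, -⟩) <;> simp at h

namespace JTAux

variable {V ι : Type*}

/-- From reachability in an induced subgraph, get a walk with support in the set. -/
lemma exists_walk_of_induce_reachable {T : SimpleGraph ι} {s : Set ι} {a b : s}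
    (h : (T.induce s).Reachable a b) :
    ∃ w : T.Walk a b, ∀ x ∈ w.support, x ∈ s := by
  obtain ⟨p⟩ := h
  refine ⟨p.map (SimpleGraph.Embedding.induce s).toHom, ?_⟩
  intro x hx
  replace hx : x ∈ (p.map (SimpleGraph.Embedding.induce s).toHom).support := hx
  rw [SimpleGraph.Walk.support_map] at hx
  obtain ⟨y, _, rfl⟩ := List.mem_map.mp hx
  exact y.2

lemma induce_reachable_of_walk {T : SimpleGraph ι} {s : Set ι} :
    ∀ {a b : ι} (w : T.Walk a b), (∀ x ∈ w.support, x ∈ s) → ∀ (ha : a ∈ s) (hb : b ∈ s),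
      (T.induce s).Reachable ⟨a, ha⟩ ⟨b, hb⟩ := by
  intro a b w
  induction w with
  | nil => intro _ ha hb; exact Reachable.refl _
  | @cons a b2 b h p ih =>
    intro hw ha hb
    have hb2 : b2 ∈ s := hw _ (by simp)
    have step : (T.induce s).Adj ⟨a, ha⟩ ⟨b2, hb2⟩ := h
    exact step.reachable.trans (ih (fun x hx => hw x (by simp [hx])) hb2 hb)

lemma side_of_walk {T : SimpleGraph ι} {c d : ι} :
    ∀ {a b : ι} (_ : T.Walk a b),
      (T.deleteEdges {s(c, d)}).Reachable a b ∨
      ((T.deleteEdges {s(c, d)}).Reachable a c ∧ (T.deleteEdges {s(c, d)}).Reachable b d) ∨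
      ((T.deleteEdges {s(c, d)}).Reachable a d ∧ (T.deleteEdges {s(c, d)}).Reachable b c) := by
  intro a b w
  induction w with
  | nil => exact Or.inl (Reachable.refl _)
  | @cons a b2 b h p ih =>
    by_cases he : s(a, b2) = s(c, d)
    · rcases Sym2.eq_iff.mp he with ⟨rfl, rfl⟩ | ⟨rfl, rfl⟩
      · rcases ih with h1 | ⟨h1, h2⟩ | ⟨h1, h2⟩
        · exact Or.inr (Or.inl ⟨Reachable.refl _, h1.symm⟩)
        · exact Or.inr (Or.inl ⟨Reachable.refl _, h2⟩)
        · exact Or.inl h2.symm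
      · rcases ih with h1 | ⟨h1, h2⟩ | ⟨h1, h2⟩
        · exact Or.inr (Or.inr ⟨Reachable.refl _, h1.symm⟩)
        · exact Or.inl h2.symm
        · exact Or.inr (Or.inr ⟨Reachable.refl _, h2⟩)
    · have hadj : (T.deleteEdges {s(c, d)}).Adj a b2 := by
        rw [SimpleGraph.deleteEdges_adj]; exact ⟨h, by simpa using he⟩
      rcases ih with h1 | ⟨h1, h2⟩ | ⟨h1, h2⟩
      · exact Or.inl (hadj.reachable.trans h1)
      · exact Or.inr (Or.inl ⟨hadj.reachable.trans h1, h2⟩)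
      · exact Or.inr (Or.inr ⟨hadj.reachable.trans h1, h2⟩)

lemma dart_decomp {T : SimpleGraph ι} :
    ∀ {a b : ι} (w : T.Walk a b) (d : T.Dart), d ∈ w.darts →
      ∃ (w1 : T.Walk a d.fst) (w2 : T.Walk d.snd b),
        w.support = w1.support ++ w2.support ∧
        w.edges = w1.edges ++ d.edge :: w2.edges := by
  intro a b w
  induction w with
  | nil => intro d hd; simp at hd
  | @cons a b2 b h p ih =>
    intro d hd
    rw [SimpleGraph.Walk.darts_cons, List.mem_cons] at hd
    rcases hd with rfl | hd
    · exact ⟨SimpleGraph.Walk.nil, p, by simp, by simp [SimpleGraph.Dart.edge]⟩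
    · obtain ⟨w1, w2, hs, he⟩ := ih d hd
      exact ⟨SimpleGraph.Walk.cons h w1, w2, by simp [hs], by simp [he]⟩

lemma exists_dart_fst {T : SimpleGraph ι} :
    ∀ {a b : ι} (w : T.Walk a b), a ≠ b → ∃ d ∈ w.darts, d.fst = a := by
  intro a b w
  induction w with
  | nil => intro h; exact absurd rfl h
  | @cons a b2 b h p _ =>
    intro _
    exact ⟨⟨(a, b2), h⟩, by simp, rfl⟩

lemma exists_dart_snd {T : SimpleGraph ι} :
    ∀ {a b : ι} (w : T.Walk a b), a ≠ b → ∃ d ∈ w.darts, d.snd = b := by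
  intro a b w
  induction w with
  | nil => intro h; exact absurd rfl h
  | @cons a b2 b h p ih =>
    intro _
    by_cases hb : b2 = b
    · subst hb; exact ⟨⟨(a, b2), h⟩, by simp, rfl⟩
    · obtain ⟨d, hd, hd2⟩ := ih hb
      exact ⟨d, by simp [hd], hd2⟩

lemma walk_invariant {α : Type*} {G : SimpleGraph α} {P : α → Prop}
    (h : ∀ ⦃a b⦄, G.Adj a b → (P a ↔ P b)) :
    ∀ {a b : α} (_ : G.Walk a b), P a ↔ P b := by
  intro a b w
  induction w with
  | nil => exact Iff.rfl
  | cons hadj p ih => exact (h hadj).trans ih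

lemma convert_walk {T T2 : SimpleGraph ι} {s : Set ι} {c d : ι}
    (hadj : ∀ ⦃x y : ι⦄, T.Adj x y → s(x, y) ≠ s(c, d) → T2.Adj x y)
    (W0 : T2.Walk c d) (hW0 : ∀ x ∈ W0.support, x ∈ s) :
    ∀ {a b : ι} (W : T.Walk a b), (∀ x ∈ W.support, x ∈ s) →
      ∃ W' : T2.Walk a b, ∀ x ∈ W'.support, x ∈ s := by
  intro a b W
  induction W with
  | nil => intro h; exact ⟨SimpleGraph.Walk.nil, h⟩
  | @cons a b2 b h p ih =>
    intro hs
    obtain ⟨W2, hW2⟩ := ih (fun x hx => hs x (by simp [hx]))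
    have happ : ∀ (q : T2.Walk a b2), (∀ x ∈ q.support, x ∈ s) →
        ∃ W' : T2.Walk a b, ∀ x ∈ W'.support, x ∈ s := by
      intro q hq
      refine ⟨q.append W2, fun x hx => ?_⟩
      rw [SimpleGraph.Walk.mem_support_append_iff] at hx
      exact hx.elim (hq x) (hW2 x)
    by_cases he : s(a, b2) = s(c, d)
    · rcases Sym2.eq_iff.mp he with ⟨rfl, rfl⟩ | ⟨rfl, rfl⟩
      · exact happ W0 hW0
      · exact happ W0.reverse (fun x hx => hW0 x (by simpa using hx))
    · refine happ ((hadj h he).toWalk) ?_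
      intro x hx
      have hx' : x = a ∨ x = b2 := by simpa using hx
      rcases hx' with rfl | rfl
      · exact hs _ (by simp)
      · exact hs _ (by simp)

lemma exists_bad_list {E : ι → Finset V} {X : Finset V} {T : SimpleGraph ι} {j : ι} :
    ∀ {a : ι} (w : T.Walk a j),
      (∀ d ∈ w.darts, ∃ v, (v ∈ E d.fst ∧ v ∈ E d.snd) ∧ v ∉ X) →
      ∀ {y z : V}, y ∈ E a → y ∉ X → z ∈ E j → z ∉ X →
      ∃ p : List V, FormsPath E p ∧ p.head? = some y ∧ p.getLast? = some z ∧
        ∀ x ∈ p, x ∉ X := by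
  intro a w
  induction w with
  | nil =>
    intro _ y z hy hyX hz hzX
    refine ⟨[y, z], ?_, rfl, by simp, ?_⟩
    · exact List.isChain_pair.mpr ⟨_, hy, hz⟩
    · intro x hx
      rcases (by simpa using hx : x = y ∨ x = z) with rfl | rfl <;> assumption
  | @cons a b2 b h p ih =>
    intro hbad y z hy hyX hz hzX
    obtain ⟨v, ⟨hva, hvb⟩, hvX⟩ := hbad ⟨(a, b2), h⟩ (by simp)
    obtain ⟨p', hform, hhead, hlast, hmem⟩ :=
      ih (fun d hd => hbad d (by simp [hd])) hvb hvX hz hzX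
    rcases p' with _ | ⟨c, t⟩
    · simp at hhead
    · have hc : c = v := by simpa using hhead
      subst hc
      refine ⟨y :: c :: t, ?_, rfl, by rw [List.getLast?_cons_cons]; exact hlast, ?_⟩
      · exact List.isChain_cons_cons.mpr ⟨⟨a, hy, hva⟩, hform⟩
      · intro x hx
        rcases List.mem_cons.mp hx with rfl | hx
        · exact hyX
        · exact hmem x hx

lemma chain_const {E : ι → Finset V} {X : Finset V} {Q : V → Prop}
    (hstep : ∀ a b, a ∉ X → b ∉ X → (∃ k, a ∈ E k ∧ b ∈ E k) → (Q a ↔ Q b)) :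
    ∀ (p : List V), FormsPath E p → (∀ x ∈ p, x ∉ X) →
      ∀ {y z : V}, p.head? = some y → p.getLast? = some z → (Q y ↔ Q z) := by
  intro p
  induction p with
  | nil => intro _ _ y z hy; simp at hy
  | cons a t ih =>
    intro hform hmem y z hy hz
    have hya : a = y := by simpa using hy
    subst hya
    rcases t with _ | ⟨b, t'⟩
    · have : a = z := by simpa using hz
      subst this; exact Iff.rfl
    · have h1 : Q a ↔ Q b := by
        refine hstep a b (hmem a (by simp)) (hmem b (by simp)) ?_
        exact (List.isChain_cons_cons.mp hform).1
      refine h1.trans (ih (List.isChain_cons_cons.mp hform).2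
        (fun x hx => hmem x (by simp [hx])) rfl ?_)
      rw [List.getLast?_cons_cons] at hz
      exact hz

lemma mem_of_path_support {E : ι → Finset V} {T : SimpleGraph ι}
    (hT : IsJoinTree E T) {i j : ι} {w : T.Walk i j} (hw : w.IsPath)
    {v : V} (hvi : v ∈ E i) (hvj : v ∈ E j) : ∀ k ∈ w.support, v ∈ E k := by
  classical
  have h := hT.2 v ⟨i, hvi⟩ ⟨j, hvj⟩
  obtain ⟨w', hw'⟩ := exists_walk_of_induce_reachable h
  have huniq := hT.1.existsUnique_path i j
  have heq : w = ↑w'.toPath := huniq.unique hw w'.toPath.2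
  intro k hk
  rw [heq] at hk
  exact hw' k (SimpleGraph.Walk.support_toPath_subset w' hk)

end JTAux

/-- For two distinct hyperedges `E_i, E_j` of an acyclic hypergraph `H`
(whose incidence graph is, as always in the paper, connected): `H` has a join tree
containing the edge `E_iE_j` iff `E_i ∩ E_j` separates `E_i \ E_j` from `E_j \ E_i`. -/
theorem stmt3 {V ι : Type*} [Fintype V] [Fintype ι] [DecidableEq V]
    (E : ι → Finset V)
    (hne : ∀ i, (E i).Nonempty) (hcov : ∀ v, ∃ i, v ∈ E i)
    (hconn : (incidenceGraph E).Connected)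
    (hacyclic : IsAcyclicHG E)
    (i j : ι) (hij : i ≠ j) :
    (∃ T : SimpleGraph ι, IsJoinTree E T ∧ T.Adj i j) ↔
      Separates E (E i ∩ E j) (E i \ E j) (E j \ E i) := by
  constructor
  · rintro ⟨T, hT, hadj⟩
    have hbr : ¬ (T.deleteEdges {s(i, j)}).Reachable i j := by
      have hb := SimpleGraph.isAcyclic_iff_forall_adj_isBridge.mp hT.1.2 hadj
      exact SimpleGraph.isBridge_iff.mp hb
    have hside : ∀ k, (T.deleteEdges {s(i, j)}).Reachable k i ∨
        (T.deleteEdges {s(i, j)}).Reachable k j := by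
      intro k
      obtain ⟨w⟩ := hT.1.1.preconnected k i
      rcases JTAux.side_of_walk (d := j) w with h1 | h1 | h1
      · exact Or.inl h1
      · exact Or.inl h1.1
      · exact Or.inr h1.1
    have key : ∀ v, v ∉ E i ∩ E j → ∀ k l, v ∈ E k → v ∈ E l →
        (T.deleteEdges {s(i, j)}).Reachable k i →
        (T.deleteEdges {s(i, j)}).Reachable l i := by
      intro v hv k l hk hl hki
      by_contra hli
      have hlj := (hside l).resolve_left hli
      obtain ⟨w, hw⟩ := JTAux.exists_walk_of_induce_reachable (hT.2 v ⟨k, hk⟩ ⟨l, hl⟩)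
      by_cases he : s(i, j) ∈ w.edges
      · have hi := w.fst_mem_support_of_mem_edges he
        have hj := w.snd_mem_support_of_mem_edges he
        exact hv (Finset.mem_inter.mpr ⟨hw i hi, hw j hj⟩)
      · have hcond : ∀ e ∈ w.edges, e ∈ (T.deleteEdges {s(i, j)}).edgeSet := by
          intro e hew
          rw [SimpleGraph.edgeSet_deleteEdges]
          refine ⟨w.edges_subset_edgeSet hew, ?_⟩
          intro h
          rw [Set.mem_singleton_iff] at h
          subst h; exact he hew
        exact hbr (hki.symm.trans ((w.transfer _ hcond).reachable.trans hlj))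
    have hne' : (E i ∩ E j).Nonempty := by
      by_contra hemp
      have hvnot : ∀ v : V, v ∉ E i ∩ E j := fun v hv => hemp ⟨v, hv⟩
      have hstep : ∀ ⦃a b⦄, (incidenceGraph E).Adj a b →
          ((Sum.elim (fun v => ∃ k, v ∈ E k ∧ (T.deleteEdges {s(i, j)}).Reachable k i)
            (fun k => (T.deleteEdges {s(i, j)}).Reachable k i) : V ⊕ ι → Prop) a ↔
           (Sum.elim (fun v => ∃ k, v ∈ E k ∧ (T.deleteEdges {s(i, j)}).Reachable k i)
            (fun k => (T.deleteEdges {s(i, j)}).Reachable k i) : V ⊕ ι → Prop) b) := by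
        rintro a b (⟨v, k, rfl, rfl, hvk⟩ | ⟨v, k, rfl, rfl, hvk⟩)
        · constructor
          · rintro ⟨k', hvk', hr⟩
            exact key v (hvnot v) k' k hvk' hvk hr
          · intro hr; exact ⟨k, hvk, hr⟩
        · constructor
          · intro hr; exact ⟨k, hvk, hr⟩
          · rintro ⟨k', hvk', hr⟩
            exact key v (hvnot v) k' k hvk' hvk hr
      obtain ⟨w⟩ := hconn.preconnected (Sum.inr i) (Sum.inr j)
      exact hbr ((JTAux.walk_invariant hstep w).mp (SimpleGraph.Reachable.refl i)).symm
    refine ⟨hne', ?_⟩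
    intro p hform hhead hlast
    by_contra hnx
    push_neg at hnx
    obtain ⟨y, hy, hhy⟩ := hhead
    obtain ⟨z, hz, hhz⟩ := hlast
    rw [Finset.mem_sdiff] at hy hz
    have hmem : ∀ x ∈ p, x ∉ E i ∩ E j := fun x hx hX => hnx x hX hx
    have hyX : y ∉ E i ∩ E j := fun h => hy.2 (Finset.mem_inter.mp h).2
    have hzX : z ∉ E i ∩ E j := fun h => hz.2 (Finset.mem_inter.mp h).1
    have hQ := JTAux.chain_const
      (Q := fun v => ∃ k, v ∈ E k ∧ (T.deleteEdges {s(i, j)}).Reachable k i)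
      (fun a b haX hbX h => by
        obtain ⟨k, hak, hbk⟩ := h
        exact ⟨fun ⟨k', hak', hr⟩ => ⟨k, hbk, key a haX k' k hak' hak hr⟩,
          fun ⟨k', hbk', hr⟩ => ⟨k, hak, key b hbX k' k hbk' hbk hr⟩⟩)
      p hform hmem hhy hhz
    obtain ⟨k, hzk, hr⟩ := hQ.mp ⟨i, hy.1, SimpleGraph.Reachable.refl i⟩
    exact hbr (key z hzX k j hzk hz.1 hr).symm
  · rintro ⟨hXne, hsep⟩
    classical
    obtain ⟨T, hT⟩ := hacyclic
    by_cases hadj : T.Adj i j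
    · exact ⟨T, hT, hadj⟩
    obtain ⟨w0⟩ := hT.1.1.preconnected i j
    obtain ⟨wp, hp⟩ : ∃ w : T.Walk i j, w.IsPath := ⟨w0.toPath, w0.toPath.2⟩
    -- find a good dart
    have hgood : ∃ d ∈ wp.darts, ∀ v, v ∈ E d.fst → v ∈ E d.snd → v ∈ E i ∩ E j := by
      rcases Finset.eq_empty_or_nonempty (E i \ E j) with hYe | ⟨y, hy⟩
      · obtain ⟨d, hd, hfst⟩ := JTAux.exists_dart_fst wp hij
        refine ⟨d, hd, fun v hv1 _ => ?_⟩
        rw [hfst] at hv1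
        have hsub : E i ⊆ E j := by rwa [Finset.sdiff_eq_empty_iff_subset] at hYe
        exact Finset.mem_inter.mpr ⟨hv1, hsub hv1⟩
      · rcases Finset.eq_empty_or_nonempty (E j \ E i) with hZe | ⟨z, hz⟩
        · obtain ⟨d, hd, hsnd⟩ := JTAux.exists_dart_snd wp hij
          refine ⟨d, hd, fun v _ hv2 => ?_⟩
          rw [hsnd] at hv2
          have hsub : E j ⊆ E i := by rwa [Finset.sdiff_eq_empty_iff_subset] at hZe
          exact Finset.mem_inter.mpr ⟨hsub hv2, hv2⟩
        · by_contra hbad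
          push_neg at hbad
          have hy' := Finset.mem_sdiff.mp hy
          have hz' := Finset.mem_sdiff.mp hz
          have hyX : y ∉ E i ∩ E j := fun h => hy'.2 (Finset.mem_inter.mp h).2
          have hzX : z ∉ E i ∩ E j := fun h => hz'.2 (Finset.mem_inter.mp h).1
          obtain ⟨p, hform, hhead, hlast, hmem⟩ := JTAux.exists_bad_list wp
            (fun d hd => by
              obtain ⟨v, h1, h2, h3⟩ := hbad d hd
              exact ⟨v, ⟨h1, h2⟩, h3⟩) hy'.1 hyX hz'.1 hzX
          obtain ⟨x, hxX, hxp⟩ := hsep p hform ⟨y, hy, hhead⟩ ⟨z, hz, hlast⟩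
          exact hmem x hxp hxX
    obtain ⟨d0, hd0, hd0X⟩ := hgood
    obtain ⟨w1, w2, hsup, hedg⟩ := JTAux.dart_decomp wp d0 hd0
    have hnodup := hp.edges_nodup
    rw [hedg, List.nodup_append] at hnodup
    have he1 : d0.edge ∉ w1.edges := fun h => hnodup.2.2 _ h _ List.mem_cons_self rfl
    have he2 : d0.edge ∉ w2.edges := (List.nodup_cons.mp hnodup.2.1).1
    set T2 : SimpleGraph ι :=
      T.deleteEdges {d0.edge} ⊔ SimpleGraph.fromEdgeSet {s(i, j)} with hT2def
    have hT2adj : T2.Adj i j := by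
      rw [hT2def, SimpleGraph.sup_adj, SimpleGraph.fromEdgeSet_adj]
      exact Or.inr ⟨rfl, hij⟩
    have hle : T.deleteEdges {d0.edge} ≤ T2 := le_sup_left
    have hcond1 : ∀ e ∈ w1.edges, e ∈ (T.deleteEdges {d0.edge}).edgeSet := by
      intro e hew
      rw [SimpleGraph.edgeSet_deleteEdges]
      refine ⟨w1.edges_subset_edgeSet hew, ?_⟩
      intro h
      rw [Set.mem_singleton_iff] at h
      subst h; exact he1 hew
    have hcond2 : ∀ e ∈ w2.edges, e ∈ (T.deleteEdges {d0.edge}).edgeSet := by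
      intro e hew
      rw [SimpleGraph.edgeSet_deleteEdges]
      refine ⟨w2.edges_subset_edgeSet hew, ?_⟩
      intro h
      rw [Set.mem_singleton_iff] at h
      subst h; exact he2 hew
    have hedge : d0.edge = s(d0.fst, d0.snd) := rfl
    have hbridge : ¬(T.deleteEdges {d0.edge}).Reachable d0.fst d0.snd := by
      have hb := SimpleGraph.isAcyclic_iff_forall_adj_isBridge.mp hT.1.2 d0.adj
      exact SimpleGraph.isBridge_iff.mp hb
    have hri : (T.deleteEdges {d0.edge}).Reachable d0.fst i :=
      (w1.transfer _ hcond1).reverse.reachable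
    have hrj : (T.deleteEdges {d0.edge}).Reachable d0.snd j :=
      (w2.transfer _ hcond2).reachable
    have hreach : ∀ k, T2.Reachable k i := by
      intro k
      obtain ⟨wk⟩ := hT.1.1.preconnected k d0.fst
      have hci : T2.Reachable d0.fst i := hri.mono hle
      have hdi : T2.Reachable d0.snd i :=
        (hrj.mono hle).trans hT2adj.symm.reachable
      rcases JTAux.side_of_walk (d := d0.snd) wk with h1 | h1 | h1
      · exact (h1.mono hle).trans hci
      · exact (h1.1.mono hle).trans hci
      · exact (h1.1.mono hle).trans hdi
    have hNE : Nonempty ι := ⟨i⟩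
    have hT2conn : T2.Connected := ⟨fun a b => (hreach a).trans (hreach b).symm⟩
    have hT2ac : T2.IsAcyclic := by
      intro v cyc hcyc
      by_cases hmemE : s(i, j) ∈ cyc.edges
      · have hnr : ¬(T2 \ SimpleGraph.fromEdgeSet {s(i, j)}).Reachable i j := by
          intro hr
          have hle2 : T2 \ SimpleGraph.fromEdgeSet {s(i, j)} ≤ T.deleteEdges {d0.edge} := by
            intro a b hab
            rw [SimpleGraph.sdiff_adj, hT2def, SimpleGraph.sup_adj] at hab
            rcases hab.1 with h | h
            · exact h
            · exact absurd h hab.2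
          have hr' : (T.deleteEdges {d0.edge}).Reachable i j := hr.mono hle2
          exact hbridge ((hri.trans hr').trans hrj.symm)
        exact (SimpleGraph.isBridge_iff_adj_and_forall_cycle_notMem
          (cyc.edges_subset_edgeSet hmemE)).mp
          (SimpleGraph.isBridge_iff.mpr hnr) cyc hcyc hmemE
      · have hcond : ∀ e ∈ cyc.edges, e ∈ T.edgeSet := by
          intro e hew
          have hmem2 : e ∈ T2.edgeSet := cyc.edges_subset_edgeSet hew
          rw [hT2def, SimpleGraph.edgeSet_sup, SimpleGraph.edgeSet_deleteEdges,
            SimpleGraph.edgeSet_fromEdgeSet] at hmem2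
          rcases hmem2 with h | h
          · exact h.1
          · exfalso
            have : e = s(i, j) := h.1
            subst this; exact hmemE hew
        exact hT.1.2 (cyc.transfer T hcond) (hcyc.transfer hcond)
    have hjoin : ∀ v : V, (T2.induce {k | v ∈ E k}).Preconnected := by
      intro v
      rintro ⟨a, ha⟩ ⟨b, hb⟩
      obtain ⟨W, hW⟩ := JTAux.exists_walk_of_induce_reachable (hT.2 v ⟨a, ha⟩ ⟨b, hb⟩)
      by_cases hvX : v ∈ E i ∩ E j
      · have hall : ∀ k ∈ wp.support, v ∈ E k :=
          JTAux.mem_of_path_support hT hp (Finset.mem_inter.mp hvX).1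
            (Finset.mem_inter.mp hvX).2
        have hW0 : ∀ x ∈ (((w1.transfer _ hcond1).mapLe hle).reverse.append
            (SimpleGraph.Walk.cons hT2adj
              ((w2.transfer _ hcond2).mapLe hle).reverse)).support, x ∈ {k | v ∈ E k} := by
          intro x hx
          rw [SimpleGraph.Walk.mem_support_append_iff] at hx
          rcases hx with hx | hx
          · rw [SimpleGraph.Walk.support_reverse, List.mem_reverse,
              SimpleGraph.Walk.support_map] at hx
            obtain ⟨x', hx', rfl⟩ := List.mem_map.mp hx
            rw [SimpleGraph.Walk.support_transfer] at hx'
            have : x' ∈ wp.support := by rw [hsup]; exact List.mem_append_left _ hx'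
            exact hall _ this
          · rw [SimpleGraph.Walk.support_cons, List.mem_cons] at hx
            rcases hx with rfl | hx
            · exact (Finset.mem_inter.mp hvX).1
            · rw [SimpleGraph.Walk.support_reverse, List.mem_reverse,
                SimpleGraph.Walk.support_map] at hx
              obtain ⟨x', hx', rfl⟩ := List.mem_map.mp hx
              rw [SimpleGraph.Walk.support_transfer] at hx'
              have : x' ∈ wp.support := by rw [hsup]; exact List.mem_append_right _ hx'
              exact hall _ this
        obtain ⟨W', hW'⟩ := JTAux.convert_walk (T := T) (T2 := T2)
          (c := d0.fst) (d := d0.snd)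
          (fun x y hxy hne2 => Or.inl ((SimpleGraph.deleteEdges_adj).mpr
            ⟨hxy, by rw [Set.mem_singleton_iff, hedge]; exact hne2⟩))
          _ hW0 W hW
        exact JTAux.induce_reachable_of_walk W' hW' ha hb
      · have heW : d0.edge ∉ W.edges := by
          intro h
          rw [hedge] at h
          have h1 := W.fst_mem_support_of_mem_edges h
          have h2 := W.snd_mem_support_of_mem_edges h
          exact hvX (hd0X v (hW _ h1) (hW _ h2))
        have hcond : ∀ e ∈ W.edges, e ∈ T2.edgeSet := by
          intro e hew
          rw [hT2def, SimpleGraph.edgeSet_sup]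
          left
          rw [SimpleGraph.edgeSet_deleteEdges]
          refine ⟨W.edges_subset_edgeSet hew, ?_⟩
          intro h
          rw [Set.mem_singleton_iff] at h
          subst h; exact heW hew
        refine JTAux.induce_reachable_of_walk (W.transfer T2 hcond) ?_ ha hb
        intro x hx
        rw [SimpleGraph.Walk.support_transfer] at hx
        exact hW x hx
    exact ⟨T2, ⟨⟨hT2conn, hT2ac⟩, hjoin⟩, hT2adj⟩
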